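/- Fix a positive integer k and let ℓ = 2k+1, r = 2k+2, L = [0,ℓ] \ ({2} ∪ [k+2, 2k]) and R = [0,r] \ ({3} ∪ [k+3, 2k+1]) as subsets of ℤ. Then for all positive integers x, y, the sumset xL + yR equals [0, xℓ + yr] \ ([xℓ+yr-k+1, xℓ+yr-1] ∪ {xℓ+yr-2k+1}). -/

import Mathlib

open Finset Pointwise

/-- `itSum k A` is the k-fold sumset A + A + ⋯ + A (with `itSum 0 A = {0}`). -/
def itSum : ℕ → Finset ℤ → Finset ℤ
  | 0, _ => {0}
  | n+1, A => A + itSum n A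

/-- `gDiff s d A = sA - dA`. -/
def gDiff (s d : ℕ) (A : Finset ℤ) : Finset ℤ := itSum s A - itSum d A

/- Auxiliary definitions and lemmas -/

noncomputable def Lset (K : ℤ) : Finset ℤ := Finset.Icc 0 (2*K+1) \ ({2} ∪ Finset.Icc (K+2) (2*K))
noncomputable def Rset (K : ℤ) : Finset ℤ := Finset.Icc 0 (2*K+2) \ ({3} ∪ Finset.Icc (K+3) (2*K+1))
noncomputable def myT (K N : ℤ) : Finset ℤ :=
  Finset.Icc 0 N \ (Finset.Icc (N - K + 1) (N - 1) ∪ {N - 2*K + 1})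

lemma mem_Lset {K a : ℤ} :
    a ∈ Lset K ↔ 0 ≤ a ∧ a ≤ 2*K+1 ∧ a ≠ 2 ∧ ¬(K+2 ≤ a ∧ a ≤ 2*K) := by
  simp only [Lset, Finset.mem_sdiff, Finset.mem_Icc, Finset.mem_union, Finset.mem_singleton]
  omega

lemma mem_Rset {K a : ℤ} :
    a ∈ Rset K ↔ 0 ≤ a ∧ a ≤ 2*K+2 ∧ a ≠ 3 ∧ ¬(K+3 ≤ a ∧ a ≤ 2*K+1) := by
  simp only [Rset, Finset.mem_sdiff, Finset.mem_Icc, Finset.mem_union, Finset.mem_singleton]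
  omega

lemma mem_myT {K N t : ℤ} :
    t ∈ myT K N ↔ 0 ≤ t ∧ t ≤ N ∧ ¬(N - K + 1 ≤ t ∧ t ≤ N - 1) ∧ t ≠ N - 2*K + 1 := by
  simp only [myT, Finset.mem_sdiff, Finset.mem_Icc, Finset.mem_union, Finset.mem_singleton]
  omega

lemma base_LR (K : ℤ) (hK : 1 ≤ K) : Lset K + Rset K = myT K (4*K+3) := by
  ext s
  simp only [Finset.mem_add, mem_Lset, mem_Rset, mem_myT]
  constructor
  · rintro ⟨a, ha, b, hb, rfl⟩
    omega
  · intro hs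
    rcases eq_or_ne s (4*K+3) with rfl | h1
    · exact ⟨2*K+1, by omega, 2*K+2, by omega, by ring⟩
    rcases le_or_gt (2*K+2) s with h2 | h2
    · exact ⟨s-(2*K+2), by omega, 2*K+2, by omega, by ring⟩
    rcases eq_or_ne s 2 with rfl | h3
    · exact ⟨0, by omega, 2, by omega, by ring⟩
    rcases le_or_gt s (K+1) with h4 | h4
    · exact ⟨s, by omega, 0, by omega, by ring⟩
    rcases eq_or_ne s (2*K+1) with rfl | h5
    · exact ⟨2*K+1, by omega, 0, by omega, by ring⟩
    rcases eq_or_ne s (K+4) with rfl | h6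
    · exact ⟨3, by omega, K+1, by omega, by ring⟩
    · exact ⟨s-(K+2), by omega, K+2, by omega, by ring⟩

lemma stepL (K : ℤ) (hK : 1 ≤ K) (N : ℤ) (hN : 4*K+3 ≤ N) :
    Lset K + myT K N = myT K (N + (2*K+1)) := by
  ext s
  simp only [Finset.mem_add, mem_Lset, mem_myT]
  constructor
  · rintro ⟨a, ha, t, ht, rfl⟩
    omega
  · intro hs
    by_cases h1 : s ≤ N - K ∧ s ≠ N - 2*K + 1
    · exact ⟨0, by omega, s, by omega, by ring⟩
    by_cases h2 : s = N - 2*K + 1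
    · exact ⟨1, by omega, s-1, by omega, by ring⟩
    · exact ⟨2*K+1, by omega, s-(2*K+1), by omega, by ring⟩

lemma stepR (K : ℤ) (hK : 1 ≤ K) (N : ℤ) (hN : 4*K+3 ≤ N) :
    Rset K + myT K N = myT K (N + (2*K+2)) := by
  ext s
  simp only [Finset.mem_add, mem_Rset, mem_myT]
  constructor
  · rintro ⟨a, ha, t, ht, rfl⟩
    omega
  · intro hs
    by_cases h1 : s ≤ N - K ∧ s ≠ N - 2*K + 1
    · exact ⟨0, by omega, s, by omega, by ring⟩
    by_cases h2 : s = N - 2*K + 1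
    · exact ⟨1, by omega, s-1, by omega, by ring⟩
    · exact ⟨2*K+2, by omega, s-(2*K+2), by omega, by ring⟩

lemma itSum_one (A : Finset ℤ) : itSum 1 A = A := by
  show A + {0} = A
  rw [Finset.singleton_zero, add_zero]

lemma key (K : ℤ) (hK : 1 ≤ K) : ∀ x y : ℕ, 1 ≤ x → 1 ≤ y →
    itSum x (Lset K) + itSum y (Rset K) = myT K ((x:ℤ)*(2*K+1) + (y:ℤ)*(2*K+2)) := by
  have hNbound : ∀ x y : ℕ, 1 ≤ x → 1 ≤ y →
      4*K+3 ≤ (x:ℤ)*(2*K+1) + (y:ℤ)*(2*K+2) := by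
    intro x y hx hy
    have hx' : (1:ℤ) ≤ (x:ℤ) := by exact_mod_cast hx
    have hy' : (1:ℤ) ≤ (y:ℤ) := by exact_mod_cast hy
    nlinarith
  have base : ∀ y : ℕ, 1 ≤ y →
      itSum 1 (Lset K) + itSum y (Rset K) = myT K ((2*K+1) + (y:ℤ)*(2*K+2)) := by
    intro y hy
    induction y, hy using Nat.le_induction with
    | base =>
      rw [itSum_one, itSum_one]
      have h1 : (2*K+1) + ((1:ℕ):ℤ)*(2*K+2) = 4*K+3 := by push_cast; ring
      rw [h1]
      exact base_LR K hK
    | succ y hy ih =>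
      have h2 : itSum 1 (Lset K) + itSum (y+1) (Rset K)
          = Rset K + (itSum 1 (Lset K) + itSum y (Rset K)) := by
        show itSum 1 (Lset K) + (Rset K + itSum y (Rset K)) = _
        exact add_left_comm _ _ _
      have hN : 4*K+3 ≤ (2*K+1) + (y:ℤ)*(2*K+2) := by
        have := hNbound 1 y le_rfl hy
        push_cast at this ⊢
        linarith
      rw [h2, ih, stepR K hK _ hN]
      congr 1
      push_cast
      ring
  intro x
  induction x with
  | zero => intro y h0 _; omega
  | succ x ih =>
    intro y hx hy
    rcases Nat.eq_or_lt_of_le hx with h | h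
    · rw [← h]
      refine (base y hy).trans ?_
      congr 1
      push_cast
      ring
    have hx1 : 1 ≤ x := by omega
    have : itSum (x+1) (Lset K) + itSum y (Rset K)
        = Lset K + (itSum x (Lset K) + itSum y (Rset K)) := by
      show Lset K + itSum x (Lset K) + itSum y (Rset K) = _
      rw [add_assoc]
    rw [this, ih y hx1 hy, stepL K hK _ (hNbound x y hx1 hy)]
    congr 1
    push_cast
    ring

theorem stmt_3 (k : ℕ) (hk : 1 ≤ k)
    (L R : Finset ℤ)
    (hL : L = Finset.Icc 0 (2 * (k : ℤ) + 1) \ ({2} ∪ Finset.Icc ((k : ℤ) + 2) (2 * (k : ℤ))))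
    (hR : R = Finset.Icc 0 (2 * (k : ℤ) + 2) \ ({3} ∪ Finset.Icc ((k : ℤ) + 3) (2 * (k : ℤ) + 1))) :
    ∀ x y : ℕ, 1 ≤ x → 1 ≤ y →
      itSum x L + itSum y R =
        Finset.Icc 0 ((x : ℤ) * (2 * k + 1) + (y : ℤ) * (2 * k + 2)) \
          (Finset.Icc ((x : ℤ) * (2 * k + 1) + (y : ℤ) * (2 * k + 2) - k + 1)
              ((x : ℤ) * (2 * k + 1) + (y : ℤ) * (2 * k + 2) - 1) ∪
            {(x : ℤ) * (2 * k + 1) + (y : ℤ) * (2 * k + 2) - 2 * k + 1}) := by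
  intro x y hx hy
  have hK : (1:ℤ) ≤ (k:ℤ) := by exact_mod_cast hk
  have hL' : L = Lset (k:ℤ) := by rw [hL]; rfl
  have hR' : R = Rset (k:ℤ) := by rw [hR]; rfl
  rw [hL', hR', key (k:ℤ) hK x y hx hy]
  rfl
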